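/- Let F_q be a finite field of characteristic p and n a positive integer with p > n. Let λ be a partition of n with λ ≠ λ', where λ' is the conjugate partition. Let T_1, …, T_{d_λ} be an enumeration of the standard Young tableaux of shape λ such that for all i > j one has e_{T_i}·e_{T_j} = 0 and ē_{T_i'}·ē_{T_j'} = 0 in F_q S_n, where T_i' denotes the transposed tableau of T_i (a tableau of shape λ'). Set e_λ^{S_n} = 1 − ∏_{i=1}^{d_λ}(1−e_{T_i}) and e_{λ'}^{S_n} = 1 − ∏_{i=1}^{d_λ}(1−ē_{T_i'}), products taken in increasing order of indices. Then every odd permutation of S_n has coefficient 0 in e_λ^{S_n} + e_{λ'}^{S_n}; that is, the support of e_λ^{S_n} + e_{λ'}^{S_n} is contained in the alternating group A_n. -/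

import Mathlib

open Equiv

/-- A Young tableau of shape `μ` with entries in `Fin n`: a bijective filling of the cells. -/
abbrev Tab (n : ℕ) (μ : YoungDiagram) : Type := {c : ℕ × ℕ // c ∈ μ} ≃ Fin n

/-- A tableau is standard if entries increase along rows and down columns. -/
def IsStandard {n : ℕ} {μ : YoungDiagram} (T : Tab n μ) : Prop :=
  ∀ c c' : {c : ℕ × ℕ // c ∈ μ},
    ((c.1.1 = c'.1.1 ∧ c.1.2 < c'.1.2) ∨ (c.1.2 = c'.1.2 ∧ c.1.1 < c'.1.1)) → T c < T c'

/-- `d_λ`: the number of standard Young tableaux of shape `μ`. -/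
noncomputable def numSYT (n : ℕ) (μ : YoungDiagram) : ℕ :=
  Nat.card {T : Tab n μ // IsStandard T}

/-- Row index of the cell containing entry `k`. -/
def rowOf {n : ℕ} {μ : YoungDiagram} (T : Tab n μ) (k : Fin n) : ℕ := (T.symm k).1.1

/-- Column index of the cell containing entry `k`. -/
def colOf {n : ℕ} {μ : YoungDiagram} (T : Tab n μ) (k : Fin n) : ℕ := (T.symm k).1.2

/-- The row stabilizer of a tableau, as a finset of permutations. -/
def rowStab {n : ℕ} {μ : YoungDiagram} (T : Tab n μ) : Finset (Perm (Fin n)) :=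
  Finset.univ.filter fun π => ∀ k, rowOf T (π k) = rowOf T k

/-- The column stabilizer of a tableau, as a finset of permutations. -/
def colStab {n : ℕ} {μ : YoungDiagram} (T : Tab n μ) : Finset (Perm (Fin n)) :=
  Finset.univ.filter fun π => ∀ k, colOf T (π k) = colOf T k

/-- The idempotent `e_T = (d_λ/n!) Σ_{ρ∈R_T} Σ_{σ∈C_T} sgn(σ) σρ`. -/
noncomputable def eT (F : Type*) [Field F] {n : ℕ} {μ : YoungDiagram} (T : Tab n μ) :
    MonoidAlgebra F (Perm (Fin n)) :=
  ((numSYT n μ : F) / (n.factorial : F)) •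
    ∑ ρ ∈ rowStab T, ∑ σ ∈ colStab T,
      ((Perm.sign σ : ℤ) : F) • MonoidAlgebra.single (σ * ρ) (1 : F)

/-- The idempotent `ē_T = (d_λ/n!) Σ_{ρ∈R_T} Σ_{σ∈C_T} sgn(σ) ρσ`. -/
noncomputable def eTbar (F : Type*) [Field F] {n : ℕ} {μ : YoungDiagram} (T : Tab n μ) :
    MonoidAlgebra F (Perm (Fin n)) :=
  ((numSYT n μ : F) / (n.factorial : F)) •
    ∑ ρ ∈ rowStab T, ∑ σ ∈ colStab T,
      ((Perm.sign σ : ℤ) : F) • MonoidAlgebra.single (ρ * σ) (1 : F)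

/-- The cells of the transposed diagram biject with the cells of the diagram. -/
def cellSwap (μ : YoungDiagram) : {c : ℕ × ℕ // c ∈ μ.transpose} ≃ {c : ℕ × ℕ // c ∈ μ} where
  toFun c := ⟨c.1.swap, YoungDiagram.mem_transpose.mp c.2⟩
  invFun c := ⟨c.1.swap, by simp [YoungDiagram.mem_transpose]⟩
  left_inv c := by simp
  right_inv c := by simp

/-- The transposed tableau, a tableau of shape `μ.transpose`. -/
def Tab.transpose {n : ℕ} {μ : YoungDiagram} (T : Tab n μ) : Tab n μ.transpose :=
  (cellSwap μ).trans T

/-- Let `λ ≠ λ'` be a partition of `n` and `T 0, …, T (d_λ - 1)` an enumeration of all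
standard tableaux of shape `λ` such that `e_{T i} * e_{T j} = 0` and
`ē_{T i'} * ē_{T j'} = 0` whenever `i > j`. Then every odd permutation has coefficient `0`
in `e_λ^{S_n} + e_{λ'}^{S_n}`, where `e_λ^{S_n} = 1 − Π_i (1 − e_{T i})` and
`e_{λ'}^{S_n} = 1 − Π_i (1 − ē_{T i'})`; that is, the support of this element is
contained in the alternating group. -/

lemma rowStab_transpose {n : ℕ} {μ : YoungDiagram} (T : Tab n μ) :
    rowStab T.transpose = colStab T := rfl

lemma colStab_transpose {n : ℕ} {μ : YoungDiagram} (T : Tab n μ) :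
    colStab T.transpose = rowStab T := rfl

lemma IsStandard.transpose {n : ℕ} {μ : YoungDiagram} {T : Tab n μ} (h : IsStandard T) :
    IsStandard T.transpose := by
  intro c c' hcc
  apply h
  rcases hcc with ⟨h1, h2⟩ | ⟨h1, h2⟩
  · exact Or.inr ⟨h1, h2⟩
  · exact Or.inl ⟨h1, h2⟩

lemma isStandard_untranspose {n : ℕ} {μ : YoungDiagram} {S : Tab n μ.transpose}
    (h : IsStandard S) : IsStandard ((cellSwap μ).symm.trans S) := by
  intro c c' hcc
  apply h
  rcases hcc with ⟨h1, h2⟩ | ⟨h1, h2⟩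
  · exact Or.inr ⟨h1, h2⟩
  · exact Or.inl ⟨h1, h2⟩

noncomputable def sytEquiv {n : ℕ} (μ : YoungDiagram) :
    {T : Tab n μ // IsStandard T} ≃ {T : Tab n μ.transpose // IsStandard T} where
  toFun T := ⟨T.1.transpose, T.2.transpose⟩
  invFun S := ⟨(cellSwap μ).symm.trans S.1, isStandard_untranspose S.2⟩
  left_inv T := by ext c; simp [Tab.transpose]
  right_inv S := by ext c; simp [Tab.transpose]

lemma numSYT_transpose {n : ℕ} (μ : YoungDiagram) :
    numSYT n μ.transpose = numSYT n μ :=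
  (Nat.card_congr (sytEquiv μ)).symm

noncomputable def sgnA (F : Type*) [Field F] (n : ℕ) :
    Perm (Fin n) →* MonoidAlgebra F (Perm (Fin n)) where
  toFun g := ((Perm.sign g : ℤ) : F) • MonoidAlgebra.single g 1
  map_one' := by simp [MonoidAlgebra.one_def]
  map_mul' g h := by
    show ((Perm.sign (g * h) : ℤ) : F) • MonoidAlgebra.single (g * h) 1 = _
    rw [smul_mul_smul_comm, MonoidAlgebra.single_mul_single, one_mul, map_mul]
    push_cast
    ring_nf

noncomputable def phi (F : Type*) [Field F] (n : ℕ) :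
    MonoidAlgebra F (Perm (Fin n)) →ₐ[F] MonoidAlgebra F (Perm (Fin n)) :=
  MonoidAlgebra.lift F (MonoidAlgebra F (Perm (Fin n))) (Perm (Fin n)) (sgnA F n)

lemma phi_single {F : Type*} [Field F] {n : ℕ} (g : Perm (Fin n)) :
    phi F n (MonoidAlgebra.single g (1 : F)) =
      ((Perm.sign g : ℤ) : F) • MonoidAlgebra.single g 1 := by
  simp [phi, MonoidAlgebra.lift_single, sgnA]

lemma phi_apply {F : Type*} [Field F] {n : ℕ} (x : MonoidAlgebra F (Perm (Fin n)))
    (g : Perm (Fin n)) : (phi F n x).coeff g = ((Perm.sign g : ℤ) : F) * x.coeff g := by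
  classical
  rw [phi, MonoidAlgebra.lift_apply, Finsupp.sum, MonoidAlgebra.coeff_sum, Finsupp.finset_sum_apply]
  rw [Finset.sum_eq_single g]
  · simp [sgnA, MonoidAlgebra.coeff_single_apply, mul_comm]
  · intro a _ ha
    simp [sgnA, MonoidAlgebra.coeff_single_apply, ha]
  · intro hg
    simp [Finsupp.notMem_support_iff.mp hg]

lemma phi_eT (F : Type*) [Field F] {n : ℕ} {μ : YoungDiagram} (T : Tab n μ) :
    phi F n (eT F T) = eTbar F T.transpose := by
  rw [eT, eTbar, numSYT_transpose, rowStab_transpose, colStab_transpose, map_smul]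
  congr 1
  simp only [map_sum, map_smul, phi_single, smul_smul]
  rw [Finset.sum_comm]
  refine Finset.sum_congr rfl fun σ hσ => Finset.sum_congr rfl fun ρ hρ => ?_
  congr 1
  rw [map_mul]
  push_cast
  rcases Int.units_eq_one_or (Perm.sign σ) with h | h <;> simp [h]

theorem stmt5 (F : Type*) [Field F] [Fintype F] (p : ℕ) [Fact p.Prime] [CharP F p]
    (n : ℕ) (hn : 0 < n) (hpn : n < p)
    (μ : YoungDiagram) (hμ : μ.card = n) (hne : μ.transpose ≠ μ)
    (T : Fin (numSYT n μ) → Tab n μ)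
    (hstd : ∀ i, IsStandard (T i))
    (hinj : Function.Injective T)
    (hsurj : ∀ S : Tab n μ, IsStandard S → ∃ i, T i = S)
    (horth : ∀ i j : Fin (numSYT n μ), j < i → eT F (T i) * eT F (T j) = 0)
    (horth' : ∀ i j : Fin (numSYT n μ), j < i →
      eTbar F (T i).transpose * eTbar F (T j).transpose = 0) :
    ∀ g : Perm (Fin n), Perm.sign g = -1 →
      ((1 - ((List.finRange (numSYT n μ)).map (fun i => 1 - eT F (T i))).prod) +
        (1 - ((List.finRange (numSYT n μ)).map
            (fun i => 1 - eTbar F (T i).transpose)).prod)).coeff g = 0 := by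
  intro g hg
  have key : phi F n (1 - ((List.finRange (numSYT n μ)).map (fun i => 1 - eT F (T i))).prod) =
      1 - ((List.finRange (numSYT n μ)).map (fun i => 1 - eTbar F (T i).transpose)).prod := by
    rw [map_sub, map_one, map_list_prod, List.map_map]
    refine congrArg (1 - List.prod ·) (List.map_congr_left fun i _ => ?_)
    show phi F n (1 - eT F (T i)) = _
    rw [map_sub, map_one, phi_eT]
  rw [← key, MonoidAlgebra.coeff_add, Finsupp.add_apply, phi_apply, hg]
  push_cast
  ring
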